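/- Define c : ℕ → ℝ for n ≥ 3 by c(n) = r₁ⁿ + r₂ⁿ + (-1)ⁿ·(y-1), where r₁ = (x-1-√((x+1)²-4y))/2 and r₂ = (x-1+√((x+1)²-4y))/2, and let p : ℕ → ℝ satisfy p(0)=1, p(1)=x, p(n)=(x-1)p(n-1)+(x-y)p(n-2). Assume (x+1)²-4y ≥ 0. Then c(3) = x³ - 3xy + 2y and for all n ≥ 4, c(n) + c(n-1) = p(n) + (x-y)·p(n-2). -/
import Mathlib


theorem cycle_closed_form_base_and_recurrence (x y : ℝ) (h : (x + 1)^2 - 4*y ≥ 0)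
    (p : ℕ → ℝ) (hp0 : p 0 = 1) (hp1 : p 1 = x)
    (hrec : ∀ n, 2 ≤ n → p n = (x - 1) * p (n - 1) + (x - y) * p (n - 2))
    (c : ℕ → ℝ)
    (hc : ∀ n, 3 ≤ n → c n =
      ((x - 1 - Real.sqrt ((x + 1)^2 - 4*y)) / 2) ^ n +
      ((x - 1 + Real.sqrt ((x + 1)^2 - 4*y)) / 2) ^ n + (-1 : ℝ) ^ n * (y - 1)) :
    c 3 = x^3 - 3*x*y + 2*y ∧
    ∀ n, 4 ≤ n → c n + c (n - 1) = p n + (x - y) * p (n - 2) := by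
  have hs : Real.sqrt ((x + 1)^2 - 4*y) ^ 2 = (x + 1)^2 - 4*y := Real.sq_sqrt h
  set s := Real.sqrt ((x + 1)^2 - 4*y) with hs_def
  set r1 : ℝ := (x - 1 - s) / 2 with hr1
  set r2 : ℝ := (x - 1 + s) / 2 with hr2
  have rsq1 : r1 ^ 2 = (x - 1) * r1 + (x - y) := by
    rw [hr1]; linear_combination (1/4 : ℝ) * hs
  have rsq2 : r2 ^ 2 = (x - 1) * r2 + (x - y) := by
    rw [hr2]; linear_combination (1/4 : ℝ) * hs
  have frec : ∀ m : ℕ, r1 ^ (m + 2) + r2 ^ (m + 2) =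
      (x - 1) * (r1 ^ (m + 1) + r2 ^ (m + 1)) + (x - y) * (r1 ^ m + r2 ^ m) := by
    intro m
    linear_combination r1 ^ m * rsq1 + r2 ^ m * rsq2
  have key : ∀ m : ℕ, (r1 ^ (m + 1) + r2 ^ (m + 1)) + (r1 ^ (m + 2) + r2 ^ (m + 2)) =
      p (m + 2) + (x - y) * p m := by
    intro m
    induction m using Nat.twoStepInduction with
    | zero =>
      have h2 := hrec 2 (by norm_num)
      simp only [show (2:ℕ) - 1 = 1 from rfl, show (2:ℕ) - 2 = 0 from rfl] at h2
      rw [h2, hp0, hp1, hr1, hr2]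
      linear_combination (1/2 : ℝ) * hs
    | one =>
      have h2 := hrec 2 (by norm_num)
      have h3 := hrec 3 (by norm_num)
      simp only [show (2:ℕ) - 1 = 1 from rfl, show (2:ℕ) - 2 = 0 from rfl,
        show (3:ℕ) - 1 = 2 from rfl, show (3:ℕ) - 2 = 1 from rfl] at h2 h3
      rw [h3, h2, hp0, hp1, hr1, hr2]
      linear_combination ((1/2 : ℝ) + 3*(x-1)/4) * hs
    | more m ih1 ih2 =>
      have h1 := hrec (m + 4) (by omega)
      have h2 := hrec (m + 2) (by omega)
      simp only [show m + 4 - 1 = m + 3 from rfl, show m + 4 - 2 = m + 2 from rfl,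
        show m + 2 - 1 = m + 1 from rfl, show m + 2 - 2 = m from rfl] at h1 h2
      linear_combination (x - 1) * ih2 + (x - y) * ih1 + frec (m + 2) + frec (m + 1)
        - h1 - (x - y) * h2
  constructor
  · rw [hc 3 (by norm_num), hr1, hr2]
    linear_combination (3 * (x - 1) / 4) * hs
  · intro n hn
    obtain ⟨m, rfl⟩ : ∃ m, n = m + 4 := ⟨n - 4, by omega⟩
    rw [show m + 4 - 1 = m + 3 from rfl, show m + 4 - 2 = m + 2 from rfl,
      hc (m + 4) (by omega), hc (m + 3) (by omega)]
    linear_combination key (m + 2)
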